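/- For nonzero u, v ∈ ℂ², the point [Π(u,v)] of ℂP² lies on the conic Q = {[z] : z₁² + z₂² + z₃² = 0} if and only if u and v are linearly dependent over ℂ (i.e. [u] = [v] in ℂP¹). In other words, Π maps the diagonal of ℂP¹ × ℂP¹ into Q and maps its complement into the complement of Q. -/

import Mathlib

/-- The map `Π : ℂ² × ℂ² → ℂ³` inducing the 2-to-1 branched cover
`ℂP¹ × ℂP¹ → ℂP²` ramified over the conic `z₁² + z₂² + z₃² = 0`. -/
noncomputable def PiMap (u v : ℂ × ℂ) : ℂ × ℂ × ℂ :=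
  (Complex.I * (u.1 * v.1 + u.2 * v.2), u.1 * v.1 - u.2 * v.2, u.1 * v.2 + u.2 * v.1)

/-- `[Π(u,v)]` lies on the conic `Q` iff `u` and `v` are linearly dependent,
i.e. `[u] = [v]` in `ℂP¹`. -/
theorem stmt1 (u v : ℂ × ℂ) (hu : u ≠ 0) (hv : v ≠ 0) :
    (PiMap u v).1 ^ 2 + (PiMap u v).2.1 ^ 2 + (PiMap u v).2.2 ^ 2 = 0 ↔
      ∃ c : ℂ, c ≠ 0 ∧ v = c • u := by
  have key : (PiMap u v).1 ^ 2 + (PiMap u v).2.1 ^ 2 + (PiMap u v).2.2 ^ 2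
      = (u.1 * v.2 - u.2 * v.1) ^ 2 := by
    simp only [PiMap]
    have hI : Complex.I ^ 2 = -1 := Complex.I_sq
    ring_nf
    linear_combination (u.1 * v.1 + u.2 * v.2) ^ 2 * hI
  rw [key, pow_eq_zero_iff (by norm_num), sub_eq_zero]
  constructor
  · intro h
    rcases eq_or_ne u.1 0 with h1 | h1
    · have h2 : u.2 ≠ 0 := by
        intro h2; exact hu (Prod.ext h1 h2)
      have hv1 : v.1 = 0 := by
        have := h; rw [h1] at this; simpa [h2] using this.symm
      have hv2 : v.2 ≠ 0 := by
        intro h2; exact hv (Prod.ext hv1 h2)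
      refine ⟨v.2 / u.2, div_ne_zero hv2 h2, ?_⟩
      apply Prod.ext
      · simp [hv1, h1]
      · simp [h2, div_mul_cancel₀]
    · have hv1 : v.1 ≠ 0 := by
        intro h2
        have hv2 : v.2 = 0 := by
          have := h; rw [h2] at this
          simpa [h1] using this
        exact hv (Prod.ext h2 hv2)
      refine ⟨v.1 / u.1, div_ne_zero hv1 h1, ?_⟩
      apply Prod.ext
      · simp [h1, div_mul_cancel₀]
      · simp only [Prod.smul_snd, smul_eq_mul]
        field_simp
        linear_combination h
  · rintro ⟨c, hc, rfl⟩
    simp [Prod.smul_def]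
    ring
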